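/- arXiv:1801.06201 — 6 statements merged into one kernel-verified Lean document; each statement's English description precedes it below -/
import Mathlib

section
/- Let n, r be positive integers, X, Y ∈ M_n(ℂ) and v an n×r complex matrix, and suppose the triple (X, Y, v) is stable. If u ∈ M_n(ℂ) satisfies u*X = X*u, u*Y = Y*u and u*v = v, then u = 1. In particular, the stabilizer of a stable triple under simultaneous conjugation on (X, Y) and left multiplication on v is trivial; this implies that the unipotent upper-triangular group U acts freely on the stable locus. -/
open Matrix

/-- A triple `(X, Y, v)` is *stable* if the `ℂ`-linear span of all vectors
`(M₁ * ⋯ * M_k) *ᵥ (j-th column of v)`, with each `Mᵢ ∈ {X, Y}`,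
is all of `Fin n → ℂ`. -/
def IsStable {n r : ℕ} (X Y : Matrix (Fin n) (Fin n) ℂ)
    (v : Matrix (Fin n) (Fin r) ℂ) : Prop :=
  Submodule.span ℂ {w : Fin n → ℂ |
    ∃ (L : List (Matrix (Fin n) (Fin n) ℂ)) (j : Fin r),
      (∀ M ∈ L, M = X ∨ M = Y) ∧ w = L.prod.mulVec fun i => v i j} = ⊤

/-- The stabilizer of a stable triple is trivial: any matrix `u` commuting with
`X` and `Y` and fixing the framing `v` is the identity. -/
theorem stabilizer_of_stable_triple_trivial
    {n r : ℕ} (hn : 0 < n) (hr : 0 < r)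
    (X Y : Matrix (Fin n) (Fin n) ℂ) (v : Matrix (Fin n) (Fin r) ℂ)
    (hstab : IsStable X Y v)
    (u : Matrix (Fin n) (Fin n) ℂ)
    (huX : u * X = X * u) (huY : u * Y = Y * u) (huv : u * v = v) :
    u = 1 := by
  have key : ∀ w ∈ (Submodule.span ℂ {w : Fin n → ℂ |
      ∃ (L : List (Matrix (Fin n) (Fin n) ℂ)) (j : Fin r),
        (∀ M ∈ L, M = X ∨ M = Y) ∧ w = L.prod.mulVec fun i => v i j}),
      u.mulVec w = w := by
    intro w hw
    induction hw using Submodule.span_induction with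
    | mem w hw =>
      obtain ⟨L, j, hL, rfl⟩ := hw
      have hcomm : u * L.prod = L.prod * u := by
        induction L with
        | nil => simp
        | cons M L ih =>
          have hM : u * M = M * u := by
            rcases hL M List.mem_cons_self with rfl | rfl
            · exact huX
            · exact huY
          have ih' := ih (fun M hM => hL M (List.mem_cons_of_mem _ hM))
          simp only [List.prod_cons]
          rw [← mul_assoc, hM, mul_assoc, ih', mul_assoc]
      have hvj : u.mulVec (fun i => v i j) = fun i => v i j := by
        funext i
        have := congrFun (congrFun huv i) j
        simpa [Matrix.mulVec, Matrix.mul_apply, dotProduct] using this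
      rw [Matrix.mulVec_mulVec, hcomm, ← Matrix.mulVec_mulVec, hvj]
    | zero => simp
    | add x y _ _ hx hy => rw [Matrix.mulVec_add, hx, hy]
    | smul c x _ hx => rw [Matrix.mulVec_smul, hx]
  have : ∀ w : Fin n → ℂ, u.mulVec w = w := by
    intro w
    exact key w (by rw [hstab]; trivial)
  ext i j
  have := congrFun (this (Pi.single j 1)) i
  simpa [Matrix.mulVec_single, Matrix.one_apply, Pi.single_apply, eq_comm] using this
end

section
/- Let n, r be positive integers, X, Y ∈ M_n(ℂ) and v an n×r complex matrix, and suppose the triple (X, Y, v) is stable. If Z ∈ M_n(ℂ) satisfies [X, Z] = 0, [Y, Z] = 0 and Z*v = 0, then Z = 0. (In particular no nonzero strictly upper-triangular matrix Z can satisfy these conditions, which is the infinitesimal form of the freeness of the U-action on the stable locus.) -/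
open Matrix

/-- The infinitesimal stabilizer of a stable triple is trivial: any matrix `Z`
commuting with `X` and `Y` and killing the framing `v` is zero. -/
theorem inf_stabilizer_of_stable_triple_trivial
    {n r : ℕ} (hn : 0 < n) (hr : 0 < r)
    (X Y : Matrix (Fin n) (Fin n) ℂ) (v : Matrix (Fin n) (Fin r) ℂ)
    (hstab : IsStable X Y v)
    (Z : Matrix (Fin n) (Fin n) ℂ)
    (hZX : X * Z - Z * X = 0) (hZY : Y * Z - Z * Y = 0) (hZv : Z * v = 0) :
    Z = 0 := by
  have hX : X * Z = Z * X := sub_eq_zero.mp hZX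
  have hY : Y * Z = Z * Y := sub_eq_zero.mp hZY
  -- Z kills every vector in the spanning set
  have hker : ∀ w ∈ {w : Fin n → ℂ |
      ∃ (L : List (Matrix (Fin n) (Fin n) ℂ)) (j : Fin r),
        (∀ M ∈ L, M = X ∨ M = Y) ∧ w = L.prod.mulVec fun i => v i j},
      Z.mulVec w = 0 := by
    rintro w ⟨L, j, hL, rfl⟩
    have hcomm : Z * L.prod = L.prod * Z := by
      induction L with
      | nil => simp
      | cons M L ih =>
        have hM := hL M List.mem_cons_self
        have ih' := ih fun N hN => hL N (List.mem_cons_of_mem _ hN)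
        rcases hM with rfl | rfl <;>
          simp only [List.prod_cons, ← mul_assoc] <;>
          [rw [← hX]; rw [← hY]] <;>
          rw [mul_assoc, ih', ← mul_assoc]
    have hZcol : Z.mulVec (fun i => v i j) = 0 := by
      funext i
      have := congrFun (congrFun hZv i) j
      simpa [Matrix.mul_apply, Matrix.mulVec, dotProduct] using this
    rw [Matrix.mulVec_mulVec, hcomm, ← Matrix.mulVec_mulVec, hZcol,
      Matrix.mulVec_zero]
  -- hence Z kills everything
  have hall : ∀ w : Fin n → ℂ, Z.mulVec w = 0 := by
    intro w
    have hw : w ∈ Submodule.span ℂ {w : Fin n → ℂ |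
        ∃ (L : List (Matrix (Fin n) (Fin n) ℂ)) (j : Fin r),
          (∀ M ∈ L, M = X ∨ M = Y) ∧ w = L.prod.mulVec fun i => v i j} := by
      rw [hstab]; trivial
    induction hw using Submodule.span_induction with
    | mem x hx => exact hker x hx
    | zero => simp
    | add a b _ _ ha hb => rw [Matrix.mulVec_add, ha, hb, add_zero]
    | smul c a _ ha => rw [Matrix.mulVec_smul, ha, smul_zero]
  ext i k
  have := congrFun (hall (Pi.single k 1)) i
  simpa [Matrix.mulVec_single] using this
end

section
/- Let n, r be positive integers, X, Y ∈ M_n(ℂ), v an n×r complex matrix, and k : Fin n → ℤ a weight function. Assume: (i) X i j = 0 and Y i j = 0 whenever k i < k j; (ii) v i j = 0 for all j whenever k i < 0; and (iii) the triple (X, Y, v) is stable. Then k j ≥ 0 for every j. (This is the GIT-stability statement: no one-parameter subgroup η(t) = diag(t^{k_1},…,t^{k_n}) with Σ k_i < 0 admits a limit of (X, Y, v) as t → 0, so every point of the stable locus is GIT stable for the determinant character.) -/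
open Matrix

/-- GIT stability: if a one-parameter subgroup `η(t) = diag(t^{k_1},…,t^{k_n})`
admits a limit of a stable triple `(X, Y, v)` as `t → 0` (conditions (i), (ii)),
then all its weights are nonnegative. -/
theorem git_stable_of_stable
    {n r : ℕ} (hn : 0 < n) (hr : 0 < r)
    (X Y : Matrix (Fin n) (Fin n) ℂ) (v : Matrix (Fin n) (Fin r) ℂ)
    (k : Fin n → ℤ)
    (hXY : ∀ i j : Fin n, k i < k j → X i j = 0 ∧ Y i j = 0)
    (hv : ∀ i : Fin n, k i < 0 → ∀ j : Fin r, v i j = 0)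
    (hstab : IsStable X Y v) :
    ∀ j : Fin n, 0 ≤ k j := by
  -- The submodule of vectors vanishing on negative-weight coordinates
  set W : Submodule ℂ (Fin n → ℂ) :=
    { carrier := {w | ∀ i : Fin n, k i < 0 → w i = 0}
      add_mem' := fun ha hb i hi => by simp [ha i hi, hb i hi]
      zero_mem' := fun i _ => rfl
      smul_mem' := fun c w hw i hi => by simp [hw i hi] } with hW
  -- generators lie in W
  have hspan : Submodule.span ℂ {w : Fin n → ℂ |
      ∃ (L : List (Matrix (Fin n) (Fin n) ℂ)) (j : Fin r),
        (∀ M ∈ L, M = X ∨ M = Y) ∧ w = L.prod.mulVec fun i => v i j} ≤ W := by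
    rw [Submodule.span_le]
    rintro w ⟨L, j, hL, rfl⟩
    induction L with
    | nil =>
      intro i hi
      simpa using hv i hi j
    | cons M L ih =>
      have hM := hL M List.mem_cons_self
      have hrest : ∀ N ∈ L, N = X ∨ N = Y := fun N hN => hL N (List.mem_cons_of_mem M hN)
      have ihW : (∀ i : Fin n, k i < 0 → (L.prod.mulVec fun i => v i j) i = 0) :=
        ih hrest
      intro i hi
      rw [List.prod_cons, ← Matrix.mulVec_mulVec, Matrix.mulVec]
      apply Finset.sum_eq_zero
      intro l _
      by_cases hl : k l < 0
      · simp [ihW l hl, dotProduct]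
      · have hkl : k i < k l := lt_of_lt_of_le hi (not_lt.mp hl)
        have : M i l = 0 := by
          rcases hM with rfl | rfl
          · exact (hXY i l hkl).1
          · exact (hXY i l hkl).2
        simp [dotProduct, this]
  intro j
  by_contra hj
  push_neg at hj
  have : (Pi.single j 1 : Fin n → ℂ) ∈ W := by
    apply hspan
    rw [hstab]
    exact Submodule.mem_top
  have := this j hj
  simp at this
end

section
/- Let n, r be positive integers. The set of stable triples (X, Y, v) is an open subset of M_n(ℂ) × M_n(ℂ) × M_{n×r}(ℂ) in the standard (product/Euclidean) topology. -/
open Matrix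

namespace StableAux

variable {n r : ℕ}

abbrev P (n r : ℕ) := Matrix (Fin n) (Fin n) ℂ × Matrix (Fin n) (Fin n) ℂ ×
    Matrix (Fin n) (Fin r) ℂ

/-- The matrix of a word in `X, Y`. -/
noncomputable def wordMat (p : P n r) (w : List Bool) : Matrix (Fin n) (Fin n) ℂ :=
  (w.map fun b => if b then p.1 else p.2.1).prod

/-- The vector attached to a word and a column index. -/
noncomputable def vecOf (p : P n r) (q : List Bool × Fin r) : Fin n → ℂ :=
  (wordMat p q.1).mulVec fun i => p.2.2 i q.2

lemma exists_word (X Y : Matrix (Fin n) (Fin n) ℂ) :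
    ∀ (L : List (Matrix (Fin n) (Fin n) ℂ)), (∀ M ∈ L, M = X ∨ M = Y) →
      ∃ w : List Bool, L = w.map fun b => if b then X else Y := by
  intro L
  induction L with
  | nil => exact fun _ => ⟨[], rfl⟩
  | cons M L ih =>
    intro h
    obtain ⟨w, hw⟩ := ih fun N hN => h N (List.mem_cons_of_mem _ hN)
    rcases h M List.mem_cons_self with hM | hM
    · exact ⟨true :: w, by simp [hM, hw]⟩
    · exact ⟨false :: w, by simp [hM, hw]⟩

lemma mem_stable_set (p : P n r) (q : List Bool × Fin r) :
    vecOf p q ∈ {w : Fin n → ℂ |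
      ∃ (L : List (Matrix (Fin n) (Fin n) ℂ)) (j : Fin r),
        (∀ M ∈ L, M = p.1 ∨ M = p.2.1) ∧ w = L.prod.mulVec fun i => p.2.2 i j} := by
  refine ⟨q.1.map fun b => if b then p.1 else p.2.1, q.2, ?_, by simp [vecOf, wordMat]⟩
  intro M hM
  simp only [List.mem_map] at hM
  obtain ⟨b, -, rfl⟩ := hM
  cases b <;> simp

lemma continuous_wordMat (w : List Bool) :
    Continuous fun p : P n r => wordMat p w := by
  induction w with
  | nil => exact continuous_const
  | cons b w ih =>
    have h1 : Continuous fun p : P n r => (if b then p.1 else p.2.1) := by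
      cases b
      · exact continuous_fst.comp continuous_snd
      · exact continuous_fst
    simp only [wordMat, List.map_cons, List.prod_cons] at ih ⊢
    exact h1.matrix_mul ih

lemma continuous_vecOf (q : List Bool × Fin r) :
    Continuous fun p : P n r => vecOf p q := by
  refine Continuous.matrix_mulVec (continuous_wordMat q.1) ?_
  exact continuous_pi fun i => (continuous_apply q.2).comp
    ((continuous_apply i).comp (continuous_snd.comp continuous_snd))

lemma stable_iff (hn : 0 < n) (p : P n r) :
    IsStable p.1 p.2.1 p.2.2 ↔
      ∃ f : Fin n → List Bool × Fin r,
        (Matrix.of fun i k => vecOf p (f i) k).det ≠ 0 := by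
  constructor
  · intro h
    unfold IsStable at h
    set S : Set (Fin n → ℂ) := {w : Fin n → ℂ |
      ∃ (L : List (Matrix (Fin n) (Fin n) ℂ)) (j : Fin r),
        (∀ M ∈ L, M = p.1 ∨ M = p.2.1) ∧ w = L.prod.mulVec fun i => p.2.2 i j} with hS
    obtain ⟨b, hbS, hbspan, hbind⟩ := exists_linearIndependent ℂ S
    rw [h] at hbspan
    have : FiniteDimensional ℂ (Fin n → ℂ) := inferInstance
    let B : Module.Basis b ℂ (Fin n → ℂ) := Module.Basis.mk hbind (by rw [Subtype.range_coe]; exact hbspan.ge)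
    have : Fintype b := FiniteDimensional.fintypeBasisIndex B
    have hcard : Fintype.card b = n := by
      have := Module.finrank_eq_card_basis B
      simpa [Module.finrank_fintype_fun_eq_card] using this.symm
    let e : Fin n ≃ b := (Fintype.equivFinOfCardEq hcard).symm
    -- each basis vector is in S; extract word data
    have hdata : ∀ i : Fin n, ∃ q : List Bool × Fin r, (e i : Fin n → ℂ) = vecOf p q := by
      intro i
      obtain ⟨L, j, hL, hval⟩ := hbS (e i).2
      obtain ⟨w, hw⟩ := exists_word p.1 p.2.1 L hL
      exact ⟨(w, j), by rw [hval, hw]; rfl⟩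
    choose f hf using hdata
    refine ⟨f, ?_⟩
    have hind : LinearIndependent ℂ fun i : Fin n => (Matrix.of fun i k => vecOf p (f i) k) i := by
      have : (fun i : Fin n => (Matrix.of fun i k => vecOf p (f i) k) i) =
          fun i : Fin n => (e i : Fin n → ℂ) := by
        funext i; exact (hf i).symm
      rw [this]
      exact hbind.comp e e.injective
    have hu := Matrix.linearIndependent_rows_iff_isUnit.mp hind
    rw [Matrix.isUnit_iff_isUnit_det, isUnit_iff_ne_zero] at hu
    exact hu
  · rintro ⟨f, hdet⟩
    unfold IsStable
    rw [eq_top_iff]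
    have : Nonempty (Fin n) := ⟨⟨0, hn⟩⟩
    have hind : LinearIndependent ℂ
        fun i : Fin n => (Matrix.of fun i k => vecOf p (f i) k) i :=
      Matrix.linearIndependent_rows_iff_isUnit.mpr
        (by rwa [Matrix.isUnit_iff_isUnit_det, isUnit_iff_ne_zero])
    have hspan := hind.span_eq_top_of_card_eq_finrank
      (by simp [Module.finrank_fintype_fun_eq_card])
    rw [← hspan]
    refine Submodule.span_mono ?_
    rintro w ⟨i, rfl⟩
    exact mem_stable_set p (f i)

end StableAux

/-- The stable locus is open in the product (Euclidean) topology. -/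
theorem isOpen_stable_locus (n r : ℕ) (hn : 0 < n) (hr : 0 < r) :
    IsOpen {p : Matrix (Fin n) (Fin n) ℂ × Matrix (Fin n) (Fin n) ℂ ×
        Matrix (Fin n) (Fin r) ℂ | IsStable p.1 p.2.1 p.2.2} := by
  have : {p : StableAux.P n r | IsStable p.1 p.2.1 p.2.2} =
      ⋃ f : Fin n → List Bool × Fin r,
        {p : StableAux.P n r |
          (Matrix.of fun i k => StableAux.vecOf p (f i) k).det ≠ 0} := by
    ext p
    simp [StableAux.stable_iff hn p]
  rw [this]
  refine isOpen_iUnion fun f => ?_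
  have hc : Continuous fun p : StableAux.P n r =>
      (Matrix.of fun i k => StableAux.vecOf p (f i) k).det := by
    refine Continuous.matrix_det ?_
    exact continuous_matrix fun i k =>
      (continuous_apply k).comp (StableAux.continuous_vecOf (f i))
  exact isOpen_compl_singleton.preimage hc
end

section
/- Let n ≥ 2 and let Br^aff_n be the affine braid group on n strands, presented by generators σ_1, …, σ_{n−1}, Δ and relations σ_i σ_{i+1} σ_i = σ_{i+1} σ_i σ_{i+1} (1 ≤ i ≤ n−2), σ_i σ_j = σ_j σ_i for |i − j| > 1, σ_{n−1} Δ σ_{n−1} Δ = Δ σ_{n−1} Δ σ_{n−1}, and σ_i Δ = Δ σ_i for i < n−1. Define the Bernstein–Lusztig elements Δ_n := Δ and Δ_i := σ_i σ_{i+1} ⋯ σ_{n−1} Δ σ_{n−1} ⋯ σ_{i+1} σ_i for 1 ≤ i ≤ n−1. Then the elements Δ_1, …, Δ_n pairwise commute: Δ_i Δ_j = Δ_j Δ_i for all i, j. -/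
open FreeGroup

/-- The defining relations of the affine braid group on `n` strands, on the
generators `some i` (the `σ_{i+1}`, `i : Fin (n-1)`, 0-indexed) and
`none` (the element `Δ`). -/
def affBraidRels (n : ℕ) : Set (FreeGroup (Option (Fin (n - 1)))) :=
  {w | ∃ i j : Fin (n - 1), (i : ℕ) + 1 = (j : ℕ) ∧
    w = of (some i) * of (some j) * of (some i) *
      (of (some j) * of (some i) * of (some j))⁻¹} ∪
  {w | ∃ i j : Fin (n - 1), (i : ℕ) + 1 < (j : ℕ) ∧
    w = of (some i) * of (some j) * (of (some j) * of (some i))⁻¹} ∪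
  {w | ∃ i : Fin (n - 1), (i : ℕ) = n - 2 ∧
    w = of (some i) * of none * of (some i) * of none *
      (of none * of (some i) * of none * of (some i))⁻¹} ∪
  {w | ∃ i : Fin (n - 1), (i : ℕ) + 1 < n - 1 ∧
    w = of (some i) * of none * (of none * of (some i))⁻¹}

/-- The affine braid group on `n` strands. -/
def AffBraidGroup (n : ℕ) := PresentedGroup (affBraidRels n)

instance (n : ℕ) : Group (AffBraidGroup n) := by
  unfold AffBraidGroup; infer_instance

/-- The generator `σ_k` (1-indexed, `1 ≤ k ≤ n-1`), or `1` if out of range. -/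
noncomputable def affSigma (n : ℕ) (k : ℕ) : AffBraidGroup n :=
  if h : k - 1 < n - 1 then PresentedGroup.of (some ⟨k - 1, h⟩) else 1

/-- The generator `Δ`. -/
noncomputable def affDelta (n : ℕ) : AffBraidGroup n :=
  PresentedGroup.of none

/-- The word `σ_i σ_{i+1} ⋯ σ_{n-1}` (1-indexed). -/
noncomputable def affSigmaWord (n : ℕ) (i : ℕ) : List (AffBraidGroup n) :=
  (((List.range (n - 1)).drop (i - 1)).map fun k => affSigma n (k + 1))

/-- The Bernstein–Lusztig element
`Δ_i = σ_i σ_{i+1} ⋯ σ_{n-1} Δ σ_{n-1} ⋯ σ_{i+1} σ_i` (with `Δ_n = Δ`). -/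
noncomputable def BL (n : ℕ) (i : ℕ) : AffBraidGroup n :=
  (affSigmaWord n i).prod * affDelta n * (affSigmaWord n i).reverse.prod

namespace AffAux
variable {n : ℕ}

lemma rel_one {w : FreeGroup (Option (Fin (n-1)))} (h : w ∈ affBraidRels n) :
    (PresentedGroup.mk (affBraidRels n) w : AffBraidGroup n) = 1 := by
  show (QuotientGroup.mk w : PresentedGroup (affBraidRels n)) = 1
  rw [QuotientGroup.eq_one_iff]
  exact Subgroup.subset_normalClosure h

lemma rel1 (i j : Fin (n-1)) (h : (i:ℕ)+1 = j) :
    (PresentedGroup.of (some i) : AffBraidGroup n) * PresentedGroup.of (some j) *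
      PresentedGroup.of (some i) =
    PresentedGroup.of (some j) * PresentedGroup.of (some i) * PresentedGroup.of (some j) := by
  have h1 := rel_one (n := n) (Or.inl (Or.inl (Or.inl ⟨i, j, h, rfl⟩)))
  simp only [MonoidHom.map_mul, MonoidHom.map_inv, mul_inv_eq_one] at h1
  exact h1

lemma rel2 (i j : Fin (n-1)) (h : (i:ℕ)+1 < j) :
    (PresentedGroup.of (some i) : AffBraidGroup n) * PresentedGroup.of (some j) =
    PresentedGroup.of (some j) * PresentedGroup.of (some i) := by
  have h1 := rel_one (n := n) (Or.inl (Or.inl (Or.inr ⟨i, j, h, rfl⟩)))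
  simp only [MonoidHom.map_mul, MonoidHom.map_inv, mul_inv_eq_one] at h1
  exact h1

lemma rel3 (i : Fin (n-1)) (h : (i:ℕ) = n-2) :
    (PresentedGroup.of (some i) : AffBraidGroup n) * PresentedGroup.of none *
      PresentedGroup.of (some i) * PresentedGroup.of none =
    PresentedGroup.of none * PresentedGroup.of (some i) * PresentedGroup.of none *
      PresentedGroup.of (some i) := by
  have h1 := rel_one (n := n) (Or.inl (Or.inr ⟨i, h, rfl⟩))
  simp only [MonoidHom.map_mul, MonoidHom.map_inv, mul_inv_eq_one] at h1
  exact h1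

lemma rel4 (i : Fin (n-1)) (h : (i:ℕ)+1 < n-1) :
    (PresentedGroup.of (some i) : AffBraidGroup n) * PresentedGroup.of none =
    PresentedGroup.of none * PresentedGroup.of (some i) := by
  have h1 := rel_one (n := n) (Or.inr ⟨i, h, rfl⟩)
  simp only [MonoidHom.map_mul, MonoidHom.map_inv, mul_inv_eq_one] at h1
  exact h1


lemma sigma_def (k : ℕ) (h1 : 1 ≤ k) (h2 : k ≤ n-1) :
    affSigma n k = PresentedGroup.of (some ⟨k-1, by omega⟩) := by
  rw [affSigma]
  exact dif_pos (by omega)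

lemma braid (k : ℕ) (h1 : 1 ≤ k) (h2 : k+1 ≤ n-1) :
    affSigma n k * affSigma n (k+1) * affSigma n k
      = affSigma n (k+1) * affSigma n k * affSigma n (k+1) := by
  rw [sigma_def k h1 (by omega), sigma_def (k+1) (by omega) h2]
  exact rel1 _ _ (by simp; omega)

lemma comm (k l : ℕ) (hk : 1 ≤ k) (h : k+1 < l) (hl : l ≤ n-1) :
    affSigma n k * affSigma n l = affSigma n l * affSigma n k := by
  rw [sigma_def k hk (by omega), sigma_def l (by omega) hl]
  exact rel2 _ _ (by simp; omega)

lemma deltaRel (hn : 2 ≤ n) :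
    affSigma n (n-1) * affDelta n * affSigma n (n-1) * affDelta n
      = affDelta n * affSigma n (n-1) * affDelta n * affSigma n (n-1) := by
  rw [sigma_def (n-1) (by omega) le_rfl, affDelta]
  exact rel3 ⟨n-2, by omega⟩ (by simp)

lemma commDelta (k : ℕ) (hk : 1 ≤ k) (h : k < n-1) :
    affSigma n k * affDelta n = affDelta n * affSigma n k := by
  rw [sigma_def k hk (by omega), affDelta]
  exact rel4 _ (by simp; omega)

lemma word_succ (i : ℕ) (h1 : 1 ≤ i) (h2 : i ≤ n-1) :
    affSigmaWord n i = affSigma n i :: affSigmaWord n (i+1) := by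
  unfold affSigmaWord
  rw [List.drop_eq_getElem_cons (by simp; omega)]
  simp only [List.map_cons, List.getElem_range]
  have e1 : i - 1 + 1 = i := by omega
  have e2 : i + 1 - 1 = i := by omega
  rw [e1, e2]

lemma word_top : affSigmaWord n n = [] := by
  unfold affSigmaWord
  rw [List.drop_eq_nil_of_le (by simp)]
  rfl

lemma BL_top : BL n n = affDelta n := by
  rw [BL, word_top]; simp

lemma BL_succ (i : ℕ) (h1 : 1 ≤ i) (h2 : i ≤ n-1) :
    BL n i = affSigma n i * BL n (i+1) * affSigma n i := by
  rw [BL, BL, word_succ i h1 h2]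
  simp [mul_assoc]


section Abstract
variable {G : Type*} [Group G]

lemma cons2 {x y x' y' : G} (h : x*y = x'*y') (t : G) : x*(y*t) = x'*(y'*t) := by
  rw [← mul_assoc, h, mul_assoc]

lemma cons3 {x y z x' y' z' : G} (h : x*y*z = x'*y'*z') (t : G) :
    x*(y*(z*t)) = x'*(y'*(z'*t)) := by
  rw [← mul_assoc, ← mul_assoc, h, mul_assoc, mul_assoc]

lemma cons4 {x y z w x' y' z' w' : G} (h : x*y*z*w = x'*y'*z'*w') (t : G) :
    x*(y*(z*(w*t))) = x'*(y'*(z'*(w'*t))) := by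
  rw [← mul_assoc, ← mul_assoc, ← mul_assoc, h, mul_assoc, mul_assoc, mul_assoc]

/-- conjugate of a commuting element commutes -/
lemma comm_conj (a b c : G) (h1 : a*b = b*a) (h2 : a*c = c*a) :
    a*(b*c*b) = b*c*b*a := by
  simp only [mul_assoc]
  rw [cons2 h1 (c*b), cons2 h2 b, h1]

/-- the key braid-type computation -/
lemma abstract1 (a b d : G) (hbr : a*b*a = b*a*b) (hc : a*d = d*a)
    (hIH : b*d*b*d = d*b*d*b) :
    a*(b*d*b)*a*(b*d*b) = b*d*b*a*(b*d*b)*a := by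
  have hbr' : a*(b*a) = b*(a*b) := by simpa only [mul_assoc] using hbr
  simp only [mul_assoc]
  rw [← cons3 hbr (d*b)]
  rw [← cons2 hc (b*(a*(d*b)))]
  rw [cons3 hbr (d*(b*(a*(d*b))))]
  rw [cons2 hc b]
  rw [cons4 hIH (a*b)]
  rw [← hbr']
  rw [← cons2 hc (b*a)]
  rw [← cons3 hbr (d*(b*a))]
  rw [← cons2 hc (b*(a*(d*(b*a))))]

end Abstract

lemma sigma_comm_BL : ∀ m k i, 1 ≤ k → k+2 ≤ i → i ≤ n → n - i ≤ m →
    affSigma n k * BL n i = BL n i * affSigma n k := by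
  intro m
  induction m with
  | zero =>
    intro k i hk hki hin hm
    have hi : i = n := by omega
    subst hi
    rw [BL_top]
    exact commDelta k hk (by omega)
  | succ m ih =>
    intro k i hk hki hin hm
    by_cases hin' : i = n
    · subst hin'
      rw [BL_top]
      exact commDelta k hk (by omega)
    · rw [BL_succ i (by omega) (by omega)]
      exact comm_conj _ _ _ (comm k i hk (by omega) (by omega))
        (ih k (i+1) hk (by omega) (by omega) (by omega))

lemma keyRel : ∀ m j, 2 ≤ j → j ≤ n → n - j ≤ m →
    affSigma n (j-1) * BL n j * affSigma n (j-1) * BL n j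
      = BL n j * affSigma n (j-1) * BL n j * affSigma n (j-1) := by
  intro m
  induction m with
  | zero =>
    intro j h2 hn' hm
    have hj : j = n := by omega
    subst hj
    rw [BL_top]
    exact deltaRel (by omega)
  | succ m ih =>
    intro j h2 hn' hm
    by_cases hj : j = n
    · subst hj
      rw [BL_top]
      exact deltaRel (by omega)
    · have e : j - 1 + 1 = j := by omega
      have hbr := braid (n := n) (j-1) (by omega) (by omega)
      rw [e] at hbr
      have hc := sigma_comm_BL (n := n) (n - (j+1)) (j-1) (j+1) (by omega) (by omega) (by omega) le_rfl
      have hIH := ih (j+1) (by omega) (by omega) (by omega)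
      have e2 : j + 1 - 1 = j := by omega
      rw [e2] at hIH
      rw [BL_succ j (by omega) (by omega)]
      exact abstract1 _ _ _ hbr hc hIH

lemma BL_comm_le : ∀ m i j, 1 ≤ i → i ≤ j → j ≤ n → j - i ≤ m →
    BL n i * BL n j = BL n j * BL n i := by
  intro m
  induction m with
  | zero =>
    intro i j h1 h2 h3 hm
    have : i = j := by omega
    subst this
    rfl
  | succ m ih =>
    intro i j h1 h2 h3 hm
    rcases eq_or_lt_of_le h2 with he | hlt
    · subst he; rfl
    · rcases eq_or_lt_of_le (Nat.succ_le_of_lt hlt) with he1 | hlt1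
      · have hP := keyRel (n - j) j (by omega) h3 le_rfl
        have e : j - 1 = i := by omega
        rw [e] at hP
        have he1' : i + 1 = j := he1
        rw [BL_succ i h1 (by omega), he1']
        simp only [mul_assoc] at hP ⊢
        exact hP
      · rw [BL_succ i h1 (by omega)]
        have h1' := sigma_comm_BL (n - j) i j h1 (by omega) h3 le_rfl
        have h2' := ih (i+1) j (by omega) (by omega) h3 (by omega)
        exact (comm_conj _ _ _ h1'.symm h2'.symm).symm

end AffAux

/-- The Bernstein–Lusztig elements `Δ_1, …, Δ_n` pairwise commute. -/
theorem BL_commute (n : ℕ) (hn : 2 ≤ n) (i j : ℕ)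
    (hi : 1 ≤ i) (hi' : i ≤ n) (hj : 1 ≤ j) (hj' : j ≤ n) :
    BL n i * BL n j = BL n j * BL n i := by
  rcases le_total i j with h | h
  · exact AffAux.BL_comm_le (j - i) i j hi h hj' le_rfl
  · exact (AffAux.BL_comm_le (i - j) j i hj h hi' le_rfl).symm
end

section
/- Let n ≥ 2 and let Br_n be the braid group on n strands, presented by generators σ_1, …, σ_{n−1} and relations σ_i σ_{i+1} σ_i = σ_{i+1} σ_i σ_{i+1} (1 ≤ i ≤ n−2) and σ_i σ_j = σ_j σ_i for |i − j| > 1. Define the Jucys–Murphy elements δ_i := σ_i σ_{i+1} ⋯ σ_{n−2} σ_{n−1}^2 σ_{n−2} ⋯ σ_{i+1} σ_i for 1 ≤ i ≤ n−1. Then the elements δ_1, …, δ_{n−1} pairwise commute: δ_i δ_j = δ_j δ_i for all i, j. -/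
open FreeGroup

/-- The braid relations on the generators `σ_{i+1}`, `i : Fin (n-1)` (0-indexed). -/
def braidRels (n : ℕ) : Set (FreeGroup (Fin (n - 1))) :=
  {w | ∃ i j : Fin (n - 1), (i : ℕ) + 1 = (j : ℕ) ∧
    w = of i * of j * of i * (of j * of i * of j)⁻¹} ∪
  {w | ∃ i j : Fin (n - 1), (i : ℕ) + 1 < (j : ℕ) ∧
    w = of i * of j * (of j * of i)⁻¹}

/-- The braid group on `n` strands. -/
def BraidGroup (n : ℕ) := PresentedGroup (braidRels n)

instance (n : ℕ) : Group (BraidGroup n) := by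
  unfold BraidGroup; infer_instance

/-- The generator `σ_k` (1-indexed, `1 ≤ k ≤ n-1`), or `1` if out of range. -/
noncomputable def braidSigma (n : ℕ) (k : ℕ) : BraidGroup n :=
  if h : k - 1 < n - 1 then PresentedGroup.of ⟨k - 1, h⟩ else 1

/-- The word `σ_i σ_{i+1} ⋯ σ_{n-1}` (1-indexed). -/
noncomputable def braidSigmaWord (n : ℕ) (i : ℕ) : List (BraidGroup n) :=
  (((List.range (n - 1)).drop (i - 1)).map fun k => braidSigma n (k + 1))

/-- The Jucys–Murphy element
`δ_i = σ_i σ_{i+1} ⋯ σ_{n-2} σ_{n-1}² σ_{n-2} ⋯ σ_{i+1} σ_i`. -/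
noncomputable def JM (n : ℕ) (i : ℕ) : BraidGroup n :=
  (braidSigmaWord n i).prod * (braidSigmaWord n i).reverse.prod

section Aux

lemma braid_rel_eq_one {n : ℕ} {r : FreeGroup (Fin (n - 1))} (h : r ∈ braidRels n) :
    (PresentedGroup.mk (braidRels n) r : BraidGroup n) = 1 := by
  show (QuotientGroup.mk r : PresentedGroup (braidRels n)) = 1
  rw [QuotientGroup.eq_one_iff]
  exact Subgroup.subset_normalClosure h

lemma braid_rel1 {n : ℕ} (i j : Fin (n - 1)) (h : (i : ℕ) + 1 = (j : ℕ)) :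
    (PresentedGroup.of i : BraidGroup n) * PresentedGroup.of j * PresentedGroup.of i
      = PresentedGroup.of j * PresentedGroup.of i * PresentedGroup.of j := by
  have h1 := braid_rel_eq_one (n := n) (Or.inl ⟨i, j, h, rfl⟩)
  simp only [_root_.map_mul, _root_.map_inv] at h1
  exact mul_inv_eq_one.mp h1

lemma braid_rel2 {n : ℕ} (i j : Fin (n - 1)) (h : (i : ℕ) + 1 < (j : ℕ)) :
    (PresentedGroup.of i : BraidGroup n) * PresentedGroup.of j
      = PresentedGroup.of j * PresentedGroup.of i := by
  have h1 := braid_rel_eq_one (n := n) (Or.inr ⟨i, j, h, rfl⟩)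
  simp only [_root_.map_mul, _root_.map_inv] at h1
  exact mul_inv_eq_one.mp h1

lemma sigma_out {n k : ℕ} (h : n ≤ k) : braidSigma n k = 1 := by
  rw [braidSigma]; exact dif_neg (by omega)

lemma sigma_braid {n k : ℕ} (h1 : 1 ≤ k) (h2 : k + 1 ≤ n - 1) :
    braidSigma n k * braidSigma n (k + 1) * braidSigma n k
      = braidSigma n (k + 1) * braidSigma n k * braidSigma n (k + 1) := by
  have hk : k - 1 < n - 1 := by omega
  have hk1 : (k + 1) - 1 < n - 1 := by omega
  rw [show braidSigma n k = PresentedGroup.of ⟨k - 1, hk⟩ from dif_pos hk,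
    show braidSigma n (k + 1) = PresentedGroup.of ⟨k + 1 - 1, hk1⟩ from dif_pos hk1]
  exact braid_rel1 ⟨k - 1, hk⟩ ⟨k + 1 - 1, hk1⟩ (by simp; omega)

lemma sigma_far {n k l : ℕ} (h1 : 1 ≤ k) (h2 : k + 2 ≤ l) :
    Commute (braidSigma n k) (braidSigma n l) := by
  by_cases hl : l - 1 < n - 1
  · have hk : k - 1 < n - 1 := by omega
    rw [show braidSigma n k = PresentedGroup.of ⟨k - 1, hk⟩ from dif_pos hk,
      show braidSigma n l = PresentedGroup.of ⟨l - 1, hl⟩ from dif_pos hl]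
    exact braid_rel2 ⟨k - 1, hk⟩ ⟨l - 1, hl⟩ (by simp; omega)
  · rw [show braidSigma n l = 1 from sigma_out (by omega)]
    exact Commute.one_right _

lemma word_out {n i : ℕ} (h : n ≤ i) : braidSigmaWord n i = [] := by
  rw [braidSigmaWord, List.drop_eq_nil_of_le (by simp; omega), List.map_nil]

lemma JM_out {n i : ℕ} (h : n ≤ i) : JM n i = 1 := by
  rw [JM, word_out h]; simp

lemma word_mem {n i : ℕ} {x : BraidGroup n} (hx : x ∈ braidSigmaWord n i) :
    ∃ m : ℕ, i ≤ m + 1 ∧ x = braidSigma n (m + 1) := by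
  rw [braidSigmaWord, List.mem_map] at hx
  obtain ⟨m, hm, rfl⟩ := hx
  refine ⟨m, ?_, rfl⟩
  rw [List.mem_iff_getElem] at hm
  obtain ⟨t, ht, hmt⟩ := hm
  rw [List.getElem_drop, List.getElem_range] at hmt
  omega

lemma word_cons {n i : ℕ} (h1 : 1 ≤ i) (h2 : i ≤ n - 1) :
    braidSigmaWord n i = braidSigma n i :: braidSigmaWord n (i + 1) := by
  rw [braidSigmaWord, braidSigmaWord,
    List.drop_eq_getElem_cons (by simp; omega), List.map_cons, List.getElem_range]
  congr 2
  · congr 1; omega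
  · congr 1; omega

lemma JM_rec {n i : ℕ} (h1 : 1 ≤ i) (h2 : i ≤ n - 1) :
    JM n i = braidSigma n i * JM n (i + 1) * braidSigma n i := by
  rw [JM, JM, word_cons h1 h2, List.prod_cons, List.reverse_cons, List.prod_append, List.prod_singleton]
  group

lemma sigma_comm_JM_far {n k i : ℕ} (hk : 1 ≤ k) (h : k + 2 ≤ i) :
    Commute (braidSigma n k) (JM n i) := by
  have key : ∀ x ∈ braidSigmaWord n i, Commute (braidSigma n k) x := by
    intro x hx
    obtain ⟨m, hm, rfl⟩ := word_mem hx
    exact sigma_far hk (by omega)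
  rw [JM]
  refine (Commute.list_prod_right _ _ key).mul_right (Commute.list_prod_right _ _ ?_)
  intro x hx
  exact key x (List.mem_reverse.mp hx)

lemma sigma_comm_JM {n : ℕ} :
    ∀ d i k : ℕ, n ≤ i + d → 1 ≤ i → i < k → Commute (braidSigma n k) (JM n i) := by
  intro d
  induction d with
  | zero =>
    intro i k h _ _
    rw [JM_out (by omega)]
    exact Commute.one_right _
  | succ d ih =>
    intro i k h hi hik
    by_cases hin : n ≤ i
    · rw [JM_out hin]; exact Commute.one_right _
    · have hi' : i ≤ n - 1 := by omega
      rw [JM_rec hi hi']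
      rcases (by omega : k = i + 1 ∨ i + 2 ≤ k) with hk | hk
      · subst hk
        by_cases hk2 : i + 1 ≤ n - 1
        · rw [JM_rec (by omega) hk2]
          have hbraid := sigma_braid hi hk2
          have hJ : braidSigma n i * JM n (i + 2) = JM n (i + 2) * braidSigma n i :=
            (sigma_comm_JM_far hi (by omega)).eq
          set a := braidSigma n i
          set b := braidSigma n (i + 1)
          set J := JM n (i + 2)
          show b * (a * (b * J * b) * a) = a * (b * J * b) * a * b
          calc b * (a * (b * J * b) * a) = (b * a * b) * (J * (b * a)) := by group
            _ = (a * b * a) * (J * (b * a)) := by rw [← hbraid]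
            _ = (a * b) * (a * J) * (b * a) := by group
            _ = (a * b) * (J * a) * (b * a) := by rw [hJ]
            _ = (a * b * J) * (a * b * a) := by group
            _ = (a * b * J) * (b * a * b) := by rw [hbraid]
            _ = a * (b * J * b) * a * b := by group
        · rw [sigma_out (by omega)]
          exact Commute.one_left _
      · have ha : Commute (braidSigma n k) (braidSigma n i) := (sigma_far hi hk).symm
        exact (ha.mul_right (ih (i + 1) k (by omega) (by omega) (by omega))).mul_right ha

lemma JM_comm_of_lt {n i j : ℕ} (hi : 1 ≤ i) (hij : i < j) :
    Commute (JM n i) (JM n j) := by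
  have key : ∀ x ∈ braidSigmaWord n j, Commute (JM n i) x := by
    intro x hx
    obtain ⟨m, hm, rfl⟩ := word_mem hx
    exact (sigma_comm_JM (n - i) i (m + 1) (by omega) hi (by omega)).symm
  rw [JM]
  refine (Commute.list_prod_right _ _ key).mul_right (Commute.list_prod_right _ _ ?_)
  intro x hx
  exact key x (List.mem_reverse.mp hx)

end Aux

/-- The Jucys–Murphy elements `δ_1, …, δ_{n-1}` pairwise commute. -/
theorem JM_commute (n : ℕ) (hn : 2 ≤ n) (i j : ℕ)
    (hi : 1 ≤ i) (hi' : i ≤ n - 1) (hj : 1 ≤ j) (hj' : j ≤ n - 1) :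
    JM n i * JM n j = JM n j * JM n i := by
  rcases lt_trichotomy i j with h | h | h
  · exact (JM_comm_of_lt hi h).eq
  · rw [h]
  · exact (JM_comm_of_lt hj h).symm.eq
end
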